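/- Let R be an Artinian commutative ring with identity and let I be an ideal of R which is a J(R)-sa-small ideal of R, where J(R) is the Jacobson radical of R. Then for every maximal ideal m of R, I is an m-sa-small ideal of R. -/

import Mathlib

open Submodule

/-- A submodule `N` of `M` is small (superfluous) in `M`: for every submodule `L`,
`N + L = M` implies `L = M`. -/
def IsSmallSubmodule {R M : Type*} [CommRing R] [AddCommGroup M] [Module R M]
    (N : Submodule R M) : Prop :=
  ∀ L : Submodule R M, N ⊔ L = ⊤ → L = ⊤

/-- `N` is a semiannihilator-small (sa-small) submodule of `M`: for every submodule `L`
with `N + L = M`, the annihilator of `L` is a small ideal of `R`. -/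
def IsSaSmall {R M : Type*} [CommRing R] [AddCommGroup M] [Module R M]
    (N : Submodule R M) : Prop :=
  ∀ L : Submodule R M, N ⊔ L = ⊤ → IsSmallSubmodule (Submodule.annihilator L : Ideal R)

/-- `N` is a `T`-semiannihilator-small (`T`-sa-small) submodule of `M`: for every nonzero
submodule `X` of `M` with `T ⊆ N + X`, the annihilator of `X` is contained in
`(T :_R M) = T.colon ⊤` and, viewed as a submodule of the `R`-module `(T :_R M)`, is small
in it: for every `R`-submodule `Y` of `(T :_R M)`, `Ann(X) + Y = (T :_R M)` implies
`Y = (T :_R M)`. -/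
def IsTSaSmall {R M : Type*} [CommRing R] [AddCommGroup M] [Module R M]
    (T N : Submodule R M) : Prop :=
  ∀ X : Submodule R M, X ≠ ⊥ → T ≤ N ⊔ X →
    Submodule.annihilator X ≤ T.colon ⊤ ∧
    ∀ Y : Ideal R, Y ≤ T.colon ⊤ →
      Submodule.annihilator X ⊔ Y = T.colon ⊤ → Y = T.colon ⊤

lemma colon_top_self {R : Type*} [CommRing R] (T : Ideal R) :
    T.colon (⊤ : Set R) = T := by
  ext r
  rw [Submodule.mem_colon]
  constructor
  · intro h; simpa using h 1 trivial
  · intro hr x _; exact T.mul_mem_right x hr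

/-- In an Artinian commutative ring, if `I` is a `J(R)`-sa-small ideal, then
`I` is an `m`-sa-small ideal for every maximal ideal `m`. -/
theorem isTSaSmall_maximal_of_jacobson {R : Type*} [CommRing R] [Nontrivial R]
    [IsArtinianRing R] (I : Ideal R)
    (h : IsTSaSmall (R := R) (M := R) (Ideal.jacobson (⊥ : Ideal R)) I)
    (m : Ideal R) (hm : m.IsMaximal) :
    IsTSaSmall (R := R) (M := R) m I := by
  intro X hX hle
  have hJm : Ideal.jacobson (⊥ : Ideal R) ≤ m := sInf_le ⟨bot_le, hm⟩
  obtain ⟨h1, h2⟩ := h X hX (hJm.trans hle)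
  rw [colon_top_self] at h1 h2
  rw [colon_top_self]
  refine ⟨h1.trans hJm, ?_⟩
  intro Y hY hsup
  have hsup' : Submodule.annihilator X ⊔ (Y ⊓ Ideal.jacobson (⊥ : Ideal R))
      = Ideal.jacobson (⊥ : Ideal R) := by
    apply le_antisymm (sup_le h1 inf_le_right)
    intro x hx
    have hxm : x ∈ Submodule.annihilator X ⊔ Y := hsup ▸ hJm hx
    obtain ⟨a, ha, y, hy, hxy⟩ := Submodule.mem_sup.mp hxm
    have hyJ : y ∈ Ideal.jacobson (⊥ : Ideal R) := by
      have : y = x - a := eq_sub_of_add_eq' hxy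
      rw [this]
      exact Submodule.sub_mem _ hx (h1 ha)
    exact Submodule.mem_sup.mpr ⟨a, ha, y, ⟨hy, hyJ⟩, hxy⟩
  have hJY : Ideal.jacobson (⊥ : Ideal R) ≤ Y := by
    have := h2 (Y ⊓ Ideal.jacobson (⊥ : Ideal R)) inf_le_right hsup'
    rw [← this]; exact inf_le_left
  rw [← hsup]
  exact le_antisymm le_sup_right (sup_le (h1.trans hJY) le_rfl)
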